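/- For all non-negative integers n, p, q, r with p ≥ n: ∑_{j=0}^{p} (-1)^j * C(n+p+q+1, p-j) * C(q+j, j) * S_r(n+r+q+1+j, r+q+1+j) = C(n+p+q+1, n) * r^n, where S_r is the r-Stirling number of the second kind. -/

import Mathlib

/-- The unsigned `r`-Stirling number of the first kind. -/
def rStirling1 (r : ℕ) : ℕ → ℕ → ℕ
  | 0, k => if r = 0 ∧ k = 0 then 1 else 0
  | n + 1, k =>
    if n + 1 < r then 0
    else if n + 1 = r then (if k = r then 1 else 0)
    else (if k = 0 then 0 else rStirling1 r n (k - 1)) + n * rStirling1 r n k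

/-- The `r`-Stirling number of the second kind. -/
def rStirling2 (r : ℕ) : ℕ → ℕ → ℕ
  | 0, k => if r = 0 ∧ k = 0 then 1 else 0
  | n + 1, k =>
    if n + 1 < r then 0
    else if n + 1 = r then (if k = r then 1 else 0)
    else (if k = 0 then 0 else rStirling2 r n (k - 1)) + k * rStirling2 r n k

lemma rS_lt_r (r : ℕ) : ∀ N k, k < r → rStirling2 r N k = 0 := by
  intro N
  induction N with
  | zero =>
    intro k hk
    simp only [rStirling2]
    rw [if_neg]; rintro ⟨h1, h2⟩; omega
  | succ N ih =>
    intro k hk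
    simp only [rStirling2]
    split
    · rfl
    · split
      · rw [if_neg]; omega
      · rcases k with _ | k'
        · simp
        · rw [if_neg (by omega)]
          rw [ih _ (by omega), ih _ hk]
          simp

lemma rS_gt (r : ℕ) : ∀ N k, N < k → rStirling2 r N k = 0 := by
  intro N
  induction N with
  | zero =>
    intro k hk
    simp only [rStirling2]
    rw [if_neg]; rintro ⟨h1, h2⟩; omega
  | succ N ih =>
    intro k hk
    simp only [rStirling2]
    split
    · rfl
    · split
      · rw [if_neg]; omega
      · rename_i h1 h2
        rw [if_neg (by omega)]
        rw [ih (k-1) (by omega), ih k (by omega)]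
        simp

lemma rS_diag (r : ℕ) : ∀ m, rStirling2 r (r + m) (r + m) = 1 := by
  intro m
  induction m with
  | zero =>
    rcases r with _ | r'
    · simp [rStirling2]
    · show rStirling2 (r'+1) (r'+1+0) (r'+1+0) = 1
      simp only [Nat.add_zero]
      simp only [rStirling2]
      simp
  | succ m ih =>
    have : r + (m+1) = (r+m) + 1 := by omega
    rw [this]
    simp only [rStirling2]
    rw [if_neg (by omega), if_neg (by omega), if_neg (by omega)]
    rw [show r+m+1-1 = r+m from by omega, ih, rS_gt r (r+m) (r+m+1) (by omega)]
    simp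

def Vz (r n m : ℕ) : ℤ := (rStirling2 r (n + r + m) (r + m) : ℤ)

lemma V0 (r m : ℕ) : Vz r 0 m = 1 := by
  simp only [Vz, Nat.zero_add]
  rw [rS_diag]
  simp

lemma Va (r n m : ℕ) : Vz r (n+1) (m+1) = Vz r (n+1) m + ((r:ℤ) + m + 1) * Vz r n (m+1) := by
  simp only [Vz]
  rw [show n+1+r+(m+1) = (n+r+m+1)+1 from by omega]
  conv_lhs => rw [rStirling2]
  rw [if_neg (by omega), if_neg (by omega), if_neg (by omega)]
  rw [show r+(m+1)-1 = r+m from by omega]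
  rw [show n+1+r+m = n+r+m+1 from by omega, show n+r+(m+1) = n+r+m+1 from by omega]
  push_cast
  ring

lemma Vb (r n : ℕ) : Vz r (n+1) 0 = (r:ℤ) * Vz r n 0 := by
  simp only [Vz, Nat.add_zero]
  rw [show n+1+r = (n+r)+1 from by omega]
  conv_lhs => rw [rStirling2]
  rw [if_neg (by omega), if_neg (by omega)]
  rcases r with _ | r'
  · simp
  · rw [if_neg (by omega)]
    rw [rS_lt_r _ _ (r'+1-1) (by omega)]
    push_cast
    ring

lemma Vpow (r : ℕ) : ∀ n, Vz r n 0 = (r:ℤ)^n := by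
  intro n
  induction n with
  | zero => rw [V0]; simp
  | succ n ih => rw [Vb, ih]; ring

open Finset in
def Zs (r n p s : ℕ) : ℤ :=
  ∑ j ∈ range (p+1),
    (-1:ℤ)^j * ((n+p+s).choose (p-j) : ℤ) * ((s+j).choose j : ℤ) * Vz r n (s+j)

open Finset in
lemma Zs_p0 (r n s : ℕ) : Zs r n 0 s = Vz r n s := by
  simp [Zs]

open Finset in
lemma pascal_sum (M p : ℕ) (g v : ℕ → ℤ) :
    ∑ j ∈ range (p+2), (-1:ℤ)^j * ((M+1).choose (p+1-j) : ℤ) * g j * v j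
    = (∑ j ∈ range (p+2), (-1:ℤ)^j * (M.choose (p+1-j) : ℤ) * g j * v j)
      + ∑ j ∈ range (p+1), (-1:ℤ)^j * (M.choose (p-j) : ℤ) * g j * v j := by
  rw [Finset.sum_range_succ (fun j => (-1:ℤ)^j * ((M+1).choose (p+1-j) : ℤ) * g j * v j) (p+1)]
  rw [Finset.sum_range_succ (fun j => (-1:ℤ)^j * (M.choose (p+1-j) : ℤ) * g j * v j) (p+1)]
  have h1 : ∀ j ∈ range (p+1),
      (-1:ℤ)^j * ((M+1).choose (p+1-j) : ℤ) * g j * v j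
      = ((-1:ℤ)^j * (M.choose (p+1-j) : ℤ) * g j * v j)
        + (-1:ℤ)^j * (M.choose (p-j) : ℤ) * g j * v j := by
    intro j hj
    have hj' : j ≤ p := by simpa [Nat.lt_succ_iff] using hj
    rw [show p+1-j = (p-j)+1 from by omega, Nat.choose_succ_succ]
    push_cast
    ring
  rw [Finset.sum_congr rfl h1, Finset.sum_add_distrib]
  simp only [Nat.sub_self, Nat.choose_zero_right]
  push_cast
  ring

open Finset in
/-- the "Pascal on the small binomial + index shift" dance. -/
lemma shift_dance (c v : ℕ → ℤ) (s p : ℕ) :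
    ∑ j ∈ range (p+2), (-1:ℤ)^j * c j * ((s+1+j).choose j : ℤ) * v j
    = (∑ j ∈ range (p+2), (-1:ℤ)^j * c j * ((s+j).choose j : ℤ) * v j)
      - ∑ j ∈ range (p+1), (-1:ℤ)^j * c (j+1) * ((s+1+j).choose j : ℤ) * v (j+1) := by
  rw [Finset.sum_range_succ' (fun j => (-1:ℤ)^j * c j * ((s+1+j).choose j : ℤ) * v j) (p+1)]
  rw [Finset.sum_range_succ' (fun j => (-1:ℤ)^j * c j * ((s+j).choose j : ℤ) * v j) (p+1)]
  have h1 : ∀ j ∈ range (p+1),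
      (-1:ℤ)^(j+1) * c (j+1) * ((s+1+(j+1)).choose (j+1) : ℤ) * v (j+1)
      = ((-1:ℤ)^(j+1) * c (j+1) * ((s+(j+1)).choose (j+1) : ℤ) * v (j+1))
        - (-1:ℤ)^j * c (j+1) * ((s+1+j).choose j : ℤ) * v (j+1) := by
    intro j hj
    rw [show s+1+(j+1) = (s+j+1)+1 from by omega, Nat.choose_succ_succ]
    rw [show s+(j+1) = s+j+1 from by omega, show s+1+j = s+j+1 from by omega]
    push_cast
    ring
  rw [Finset.sum_congr rfl h1, Finset.sum_sub_distrib]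
  simp only [Nat.choose_zero_right, Nat.add_zero]
  push_cast
  ring

open Finset in
lemma ZR1raw (r n p s M : ℕ) :
    ∑ j ∈ range (p+2), (-1:ℤ)^j * ((M+1).choose (p+1-j) : ℤ) * ((s+1+j).choose j : ℤ) * Vz r (n+1) (s+1+j)
    = (∑ j ∈ range (p+2), (-1:ℤ)^j * (M.choose (p+1-j) : ℤ) * ((s+j).choose j : ℤ) * Vz r (n+1) (s+j))
      + ((r:ℤ)+s+1) * (∑ j ∈ range (p+2), (-1:ℤ)^j * (M.choose (p+1-j) : ℤ) * ((s+1+j).choose j : ℤ) * Vz r n (s+1+j))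
      - ((s:ℤ)+2) * (∑ j ∈ range (p+1), (-1:ℤ)^j * (M.choose (p-j) : ℤ) * ((s+2+j).choose j : ℤ) * Vz r n (s+2+j)) := by
  have hA := pascal_sum M p (fun j => ((s+1+j).choose j : ℤ)) (fun j => Vz r (n+1) (s+1+j))
  rw [hA]
  -- split W1 by the V recurrence
  have hB : ∑ j ∈ range (p+2), (-1:ℤ)^j * (M.choose (p+1-j) : ℤ) * ((s+1+j).choose j : ℤ) * Vz r (n+1) (s+1+j)
      = (∑ j ∈ range (p+2), (-1:ℤ)^j * (M.choose (p+1-j) : ℤ) * ((s+1+j).choose j : ℤ) * Vz r (n+1) (s+j))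
        + ((∑ j ∈ range (p+2), ((r:ℤ)+s+1) * ((-1:ℤ)^j * (M.choose (p+1-j) : ℤ) * ((s+1+j).choose j : ℤ) * Vz r n (s+1+j)))
        + ∑ j ∈ range (p+2), (-1:ℤ)^j * (M.choose (p+1-j) : ℤ) * ((s+1+j).choose j : ℤ) * ((j:ℤ) * Vz r n (s+1+j))) := by
    rw [← Finset.sum_add_distrib, ← Finset.sum_add_distrib]
    refine Finset.sum_congr rfl (fun j _ => ?_)
    have hv : Vz r (n+1) (s+1+j) = Vz r (n+1) (s+j) + ((r:ℤ) + (s+j) + 1) * Vz r n (s+1+j) := by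
      rw [show s+1+j = (s+j)+1 from by omega]
      exact Va r n (s+j)
    rw [hv]
    push_cast
    ring
  rw [hB]
  -- step C : W1a = T1 - W2
  have hC := shift_dance (fun j => (M.choose (p+1-j) : ℤ)) (fun j => Vz r (n+1) (s+j)) s p
  have hC2 : ∑ j ∈ range (p+1), (-1:ℤ)^j * (M.choose (p+1-(j+1)) : ℤ) * ((s+1+j).choose j : ℤ) * Vz r (n+1) (s+(j+1))
      = ∑ j ∈ range (p+1), (-1:ℤ)^j * (M.choose (p-j) : ℤ) * ((s+1+j).choose j : ℤ) * Vz r (n+1) (s+1+j) := by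
    refine Finset.sum_congr rfl (fun j _ => ?_)
    rw [show p+1-(j+1) = p-j from by omega, show s+(j+1) = s+1+j from by omega]
  rw [hC2] at hC
  rw [hC]
  -- step D : J = -(s+2) * Z3
  have hD : ∑ j ∈ range (p+2), (-1:ℤ)^j * (M.choose (p+1-j) : ℤ) * ((s+1+j).choose j : ℤ) * ((j:ℤ) * Vz r n (s+1+j))
      = -(((s:ℤ)+2) * ∑ j ∈ range (p+1), (-1:ℤ)^j * (M.choose (p-j) : ℤ) * ((s+2+j).choose j : ℤ) * Vz r n (s+2+j)) := by
    rw [Finset.sum_range_succ' (fun j => (-1:ℤ)^j * (M.choose (p+1-j) : ℤ) * ((s+1+j).choose j : ℤ) * ((j:ℤ) * Vz r n (s+1+j))) (p+1)]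
    simp only [Nat.cast_zero, zero_mul, mul_zero, add_zero, Nat.cast_ofNat]
    rw [Finset.mul_sum, ← Finset.sum_neg_distrib]
    refine Finset.sum_congr rfl (fun j _ => ?_)
    rw [show p+1-(j+1) = p-j from by omega, show s+1+(j+1) = s+2+j from by omega]
    have hch := Nat.choose_succ_right_eq (s+2+j) j
    rw [show s+2+j-j = s+2 from by omega] at hch
    have hch' : ((s+2+j).choose (j+1) : ℤ) * ((j:ℤ)+1) = ((s+2+j).choose j : ℤ) * ((s:ℤ)+2) := by
      exact_mod_cast congrArg (Nat.cast : ℕ → ℤ) hch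
    push_cast
    push_cast at hch'
    linear_combination (-(-1:ℤ)^j * (M.choose (p-j) : ℤ) * Vz r n (s+2+j)) * hch'
  rw [hD, ← Finset.mul_sum]
  ring

open Finset in
lemma ZR1 (r n p s : ℕ) :
    Zs r (n+1) (p+1) (s+1)
    = Zs r (n+1) (p+1) s + ((r:ℤ)+s+1) * Zs r n (p+1) (s+1) - ((s:ℤ)+2) * Zs r n p (s+2) := by
  simp only [Zs]
  simp only [show n+1+(p+1)+(s+1) = (n+p+s+2)+1 from by omega,
    show n+1+(p+1)+s = n+p+s+2 from by omega,
    show n+(p+1)+(s+1) = n+p+s+2 from by omega,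
    show n+p+(s+2) = n+p+s+2 from by omega,
    show p+1+1 = p+2 from rfl]
  exact ZR1raw r n p s (n+p+s+2)

open Finset in
lemma pascal_sum3 (M p : ℕ) (X : ℕ → ℤ) :
    ∑ j ∈ range (p+2), (-1:ℤ)^j * ((M+1).choose (p+1-j) : ℤ) * X j
    = (∑ j ∈ range (p+2), (-1:ℤ)^j * (M.choose (p+1-j) : ℤ) * X j)
      + ∑ j ∈ range (p+1), (-1:ℤ)^j * (M.choose (p-j) : ℤ) * X j := by
  have := pascal_sum M p (fun _ => 1) X
  simp only [mul_one] at this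
  calc ∑ j ∈ range (p+2), (-1:ℤ)^j * ((M+1).choose (p+1-j) : ℤ) * X j
      = ∑ j ∈ range (p+2), (-1:ℤ)^j * ((M+1).choose (p+1-j) : ℤ) * 1 * X j := by
        refine Finset.sum_congr rfl fun j _ => by ring
    _ = (∑ j ∈ range (p+2), (-1:ℤ)^j * (M.choose (p+1-j) : ℤ) * 1 * X j)
      + ∑ j ∈ range (p+1), (-1:ℤ)^j * (M.choose (p-j) : ℤ) * 1 * X j := pascal_sum M p (fun _ => 1) X
    _ = _ := by
        rw [show (∑ j ∈ range (p+2), (-1:ℤ)^j * (M.choose (p+1-j) : ℤ) * 1 * X j)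
            = ∑ j ∈ range (p+2), (-1:ℤ)^j * (M.choose (p+1-j) : ℤ) * X j from
          Finset.sum_congr rfl fun j _ => by ring]
        rw [show (∑ j ∈ range (p+1), (-1:ℤ)^j * (M.choose (p-j) : ℤ) * 1 * X j)
            = ∑ j ∈ range (p+1), (-1:ℤ)^j * (M.choose (p-j) : ℤ) * X j from
          Finset.sum_congr rfl fun j _ => by ring]

open Finset in
lemma ZR0raw (r n p M : ℕ) :
    ∑ j ∈ range (p+2), (-1:ℤ)^j * ((M+1).choose (p+1-j) : ℤ) * ((0+j).choose j : ℤ) * Vz r (n+1) (0+j)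
    = (r:ℤ) * (∑ j ∈ range (p+2), (-1:ℤ)^j * (M.choose (p+1-j) : ℤ) * ((0+j).choose j : ℤ) * Vz r n (0+j))
      - ∑ j ∈ range (p+1), (-1:ℤ)^j * (M.choose (p-j) : ℤ) * ((1+j).choose j : ℤ) * Vz r n (1+j) := by
  simp only [Nat.zero_add, Nat.choose_self, Nat.cast_one, mul_one]
  simp only [show ∀ k:ℕ, 1+k = k+1 from fun k => Nat.add_comm 1 k, Nat.choose_succ_self_right]
  rw [pascal_sum3 M p (fun j => Vz r (n+1) j)]
  rw [Finset.sum_range_succ' (fun j => (-1:ℤ)^j * (M.choose (p+1-j) : ℤ) * Vz r (n+1) j) (p+1)]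
  rw [Finset.sum_range_succ' (fun j => (-1:ℤ)^j * (M.choose (p+1-j) : ℤ) * Vz r n j) (p+1)]
  simp only [pow_zero, one_mul, Nat.sub_zero]
  have hsplit : ∀ j ∈ range (p+1),
      (-1:ℤ)^(j+1) * (M.choose (p+1-(j+1)) : ℤ) * Vz r (n+1) (j+1)
      = -((-1:ℤ)^j * (M.choose (p-j) : ℤ) * Vz r (n+1) j)
        + (-((r:ℤ) * ((-1:ℤ)^j * (M.choose (p-j) : ℤ) * Vz r n (j+1)))
        + -((-1:ℤ)^j * (M.choose (p-j) : ℤ) * (((j:ℤ)+1)) * Vz r n (j+1))) := by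
    intro j _
    rw [show p+1-(j+1) = p-j from by omega]
    rw [show Vz r (n+1) (j+1) = Vz r (n+1) j + ((r:ℤ) + j + 1) * Vz r n (j+1) from Va r n j]
    push_cast
    ring
  rw [Finset.sum_congr rfl hsplit, Finset.sum_add_distrib, Finset.sum_add_distrib]
  have hr : ∀ j ∈ range (p+1),
      (-1:ℤ)^(j+1) * (M.choose (p+1-(j+1)) : ℤ) * Vz r n (j+1)
      = -((-1:ℤ)^j * (M.choose (p-j) : ℤ) * Vz r n (j+1)) := by
    intro j _
    rw [show p+1-(j+1) = p-j from by omega]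
    ring
  rw [Finset.sum_congr rfl hr]
  have hz3 : ∀ j ∈ range (p+1),
      (-1:ℤ)^j * (M.choose (p-j) : ℤ) * ((j+1 : ℕ) : ℤ) * Vz r n (j+1)
      = (-1:ℤ)^j * (M.choose (p-j) : ℤ) * (((j:ℤ)+1)) * Vz r n (j+1) := by
    intro j _
    push_cast
    ring
  rw [Finset.sum_congr rfl hz3]
  simp only [Finset.sum_neg_distrib]
  rw [Vb r n, ← Finset.mul_sum]
  ring

open Finset in
lemma ZR0 (r n p : ℕ) :
    Zs r (n+1) (p+1) 0 = (r:ℤ) * Zs r n (p+1) 0 - Zs r n p 1 := by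
  simp only [Zs]
  simp only [show n+1+(p+1)+0 = (n+p+1)+1 from by omega,
    show n+(p+1)+0 = n+p+1 from by omega,
    show p+1+1 = p+2 from rfl]
  exact ZR0raw r n p (n+p+1)

open Finset in
lemma L1 (m : ℕ) : ∀ p, ∑ j ∈ range (p+1), (-1:ℤ)^j * ((m+1).choose (p-j) : ℤ) = (m.choose p : ℤ) := by
  intro p
  induction p with
  | zero => simp
  | succ p ih =>
    rw [Finset.sum_range_succ' (fun j => (-1:ℤ)^j * ((m+1).choose (p+1-j) : ℤ)) (p+1)]
    have h1 : ∀ j ∈ range (p+1),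
        (-1:ℤ)^(j+1) * ((m+1).choose (p+1-(j+1)) : ℤ)
        = -((-1:ℤ)^j * ((m+1).choose (p-j) : ℤ)) := by
      intro j _
      rw [show p+1-(j+1) = p-j from by omega]
      ring
    rw [Finset.sum_congr rfl h1]
    simp only [Finset.sum_neg_distrib]
    rw [ih]
    simp only [pow_zero, one_mul, Nat.sub_zero, Nat.choose_succ_succ m p]
    push_cast
    ring

open Finset in
lemma L2 : ∀ s m p, ∑ j ∈ range (p+1), (-1:ℤ)^j * ((m+s+1).choose (p-j) : ℤ) * ((s+j).choose j : ℤ)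
    = (m.choose p : ℤ) := by
  intro s
  induction s with
  | zero =>
    intro m p
    have := L1 m p
    calc ∑ j ∈ range (p+1), (-1:ℤ)^j * ((m+0+1).choose (p-j) : ℤ) * ((0+j).choose j : ℤ)
        = ∑ j ∈ range (p+1), (-1:ℤ)^j * ((m+1).choose (p-j) : ℤ) := by
          refine Finset.sum_congr rfl fun j _ => ?_
          simp [Nat.zero_add, Nat.choose_self]
      _ = (m.choose p : ℤ) := L1 m p
  | succ s ih =>
    intro m p
    induction p with
    | zero => simp
    | succ p ihp =>
      -- use the shift dance with v = 1
      have hd := shift_dance (fun j => ((m+s+2).choose (p+1-j) : ℤ)) (fun _ => (1:ℤ)) s p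
      simp only [mul_one] at hd
      have e1 : ∑ j ∈ range (p+2), (-1:ℤ)^j * ((m+s+2).choose (p+1-j) : ℤ) * ((s+j).choose j : ℤ)
          = ((m+1).choose (p+1) : ℤ) := by
        have := ih (m+1) (p+1)
        rw [show m+1+s+1 = m+s+2 from by omega] at this
        exact this
      have e2 : ∑ j ∈ range (p+1), (-1:ℤ)^j * ((m+s+2).choose (p+1-(j+1)) : ℤ) * ((s+1+j).choose j : ℤ)
          = (m.choose p : ℤ) := by
        have h0 : ∀ j ∈ range (p+1),
            (-1:ℤ)^j * ((m+s+2).choose (p+1-(j+1)) : ℤ) * ((s+1+j).choose j : ℤ)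
            = (-1:ℤ)^j * ((m+(s+1)+1).choose (p-j) : ℤ) * (((s+1)+j).choose j : ℤ) := by
          intro j _
          rw [show p+1-(j+1) = p-j from by omega, show m+s+2 = m+(s+1)+1 from by omega]
        rw [Finset.sum_congr rfl h0]
        exact ihp
      have goal0 : ∑ j ∈ range (p+2), (-1:ℤ)^j * ((m+s+2).choose (p+1-j) : ℤ) * ((s+1+j).choose j : ℤ)
          = ((m+1).choose (p+1) : ℤ) - (m.choose p : ℤ) := by
        rw [hd, e1, e2]
      have h0 : ∀ j ∈ range (p+2),
          (-1:ℤ)^j * ((m+(s+1)+1).choose (p+1-j) : ℤ) * (((s+1)+j).choose j : ℤ)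
          = (-1:ℤ)^j * ((m+s+2).choose (p+1-j) : ℤ) * ((s+1+j).choose j : ℤ) := by
        intro j _
        rw [show m+(s+1)+1 = m+s+2 from by omega]
      rw [Finset.sum_congr rfl h0, goal0]
      rw [Nat.choose_succ_succ m p]
      push_cast
      ring

lemma Zzero (r : ℕ) : ∀ n p s, n + 1 ≤ p → Zs r n p s = 0 := by
  intro n
  induction n with
  | zero =>
    intro p s hp
    obtain ⟨p', rfl⟩ : ∃ p', p = p'+1 := ⟨p-1, by omega⟩
    simp only [Zs]
    have h0 : ∀ j ∈ Finset.range (p'+1+1),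
        (-1:ℤ)^j * ((0+(p'+1)+s).choose (p'+1-j) : ℤ) * ((s+j).choose j : ℤ) * Vz r 0 (s+j)
        = (-1:ℤ)^j * ((p'+s+1).choose (p'+1-j) : ℤ) * ((s+j).choose j : ℤ) := by
      intro j _
      rw [V0, show 0+(p'+1)+s = p'+s+1 from by omega]
      ring
    rw [Finset.sum_congr rfl h0]
    have := L2 s (p'+1-1) (p'+1)
    rw [show p'+1-1 = p' from by omega] at this
    rw [this]
    rw [Nat.choose_eq_zero_of_lt (by omega)]
    simp
  | succ n ih =>
    intro p s hp
    obtain ⟨p', rfl⟩ : ∃ p', p = p'+1 := ⟨p-1, by omega⟩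
    have hp' : n + 1 ≤ p' := by omega
    induction s with
    | zero =>
      rw [ZR0, ih (p'+1) 0 (by omega), ih p' 1 hp']
      ring
    | succ s ihs =>
      rw [ZR1, ihs, ih (p'+1) (s+1) (by omega), ih p' (s+2) hp']
      ring

open Finset in
def Dz (r n w : ℕ) : ℤ := ∑ a ∈ range (w+1), Zs r n a (w-a)

open Finset in
lemma Dbase0 (r w : ℕ) : Dz r 0 w = 1 := by
  unfold Dz
  rw [Finset.sum_range_succ' (fun a => Zs r 0 a (w-a)) w]
  have h0 : ∀ a ∈ range w, Zs r 0 (a+1) (w-(a+1)) = 0 := fun a _ => Zzero r 0 (a+1) _ (by omega)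
  rw [Finset.sum_congr rfl h0]
  simp [Zs_p0, V0]

open Finset in
lemma DbaseW (r n : ℕ) : Dz r n 0 = (r:ℤ)^n := by
  unfold Dz
  simp [Zs_p0, Vpow]

open Finset in
lemma Drec (r n w : ℕ) : Dz r (n+1) (w+1) = Dz r (n+1) w + (r:ℤ) * Dz r n (w+1) := by
  unfold Dz
  have key : ∀ a ∈ range (w+2), Zs r (n+1) a (w+1-a)
      = (if a ≤ w then Zs r (n+1) a (w-a) else 0)
        + ((r:ℤ) * Zs r n a (w+1-a) + ((w+1-a : ℕ):ℤ) * Zs r n a (w+1-a))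
        - (if a = 0 then 0 else ((w+2-a : ℕ):ℤ) * Zs r n (a-1) (w+2-a)) := by
    intro a ha
    rcases a with _ | b
    · simp only [if_pos (Nat.zero_le w), if_pos rfl, Nat.sub_zero]
      simp only [Zs_p0]
      have hv : Vz r (n+1) (w+1) = Vz r (n+1) w + ((r:ℤ) + w + 1) * Vz r n (w+1) := Va r n w
      push_cast
      linarith [hv]
    · by_cases hb : b+1 ≤ w
      · obtain ⟨s, rfl⟩ : ∃ s, w = b+1+s := ⟨w-b-1, by omega⟩
        rw [if_pos hb, if_neg (by omega)]
        rw [show b+1+s+1-(b+1) = s+1 from by omega, show b+1+s-(b+1) = s from by omega,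
            show b+1+s+2-(b+1) = s+2 from by omega, show b+1-1 = b from by omega]
        rw [ZR1]
        push_cast
        ring
      · have hbw : b = w := by
          have := Finset.mem_range.mp ha; omega
        subst hbw
        rw [if_neg (by omega), if_neg (by omega)]
        rw [show b+1-(b+1) = 0 from by omega, show b+2-(b+1) = 1 from by omega,
            show b+1-1 = b from by omega]
        rw [ZR0]
        push_cast
        ring
  rw [Finset.sum_congr rfl key]
  rw [Finset.sum_sub_distrib, Finset.sum_add_distrib, Finset.sum_add_distrib]
  have hP : ∑ a ∈ range (w+2), (if a ≤ w then Zs r (n+1) a (w-a) else 0)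
      = ∑ a ∈ range (w+1), Zs r (n+1) a (w-a) := by
    rw [Finset.sum_range_succ]
    rw [if_neg (by omega)]
    rw [Finset.sum_congr rfl (fun a ha => if_pos (by have := Finset.mem_range.mp ha; omega))]
    ring
  have hQ1 : ∑ a ∈ range (w+2), (r:ℤ) * Zs r n a (w+1-a)
      = (r:ℤ) * ∑ a ∈ range (w+2), Zs r n a (w+1-a) := by
    rw [Finset.mul_sum]
  have hQ2 : ∑ a ∈ range (w+2), ((w+1-a : ℕ):ℤ) * Zs r n a (w+1-a)
      = ∑ a ∈ range (w+2), (if a = 0 then 0 else ((w+2-a : ℕ):ℤ) * Zs r n (a-1) (w+2-a)) := by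
    rw [Finset.sum_range_succ (fun a => ((w+1-a : ℕ):ℤ) * Zs r n a (w+1-a)) (w+1)]
    rw [Finset.sum_range_succ' (fun a => if a = 0 then (0:ℤ) else ((w+2-a : ℕ):ℤ) * Zs r n (a-1) (w+2-a)) (w+1)]
    have hc : ∀ a ∈ range (w+1),
        (if a+1 = 0 then (0:ℤ) else ((w+2-(a+1) : ℕ):ℤ) * Zs r n (a+1-1) (w+2-(a+1)))
        = ((w+1-a : ℕ):ℤ) * Zs r n a (w+1-a) := by
      intro a _
      rw [if_neg (by omega), show a+1-1 = a from rfl, show w+2-(a+1) = w+1-a from by omega]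
    rw [Finset.sum_congr rfl hc, show w+1-(w+1) = 0 from by omega]
    simp
  rw [hP, hQ1, hQ2]
  ring

open Finset in
lemma Dval (r : ℕ) : ∀ n w, Dz r n w = ((n+w).choose n : ℤ) * (r:ℤ)^n := by
  intro n
  induction n with
  | zero => intro w; rw [Dbase0]; simp
  | succ n ih =>
    intro w
    induction w with
    | zero => rw [DbaseW]; simp
    | succ w ihw =>
      rw [Drec, ihw, ih (w+1)]
      rw [show n+1+(w+1) = (n+w+1)+1 from by omega, Nat.choose_succ_succ (n+w+1) n]
      rw [show n+1+w = n+w+1 from by omega, show n+(w+1) = n+w+1 from by omega]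
      push_cast
      ring

open Finset in
def Ys (r n p t : ℕ) : ℤ :=
  ∑ j ∈ range (p+1), (-1:ℤ)^j * ((n+p+t+1).choose (p-j) : ℤ) * ((t+j).choose j : ℤ) * Vz r n (t+1+j)

open Finset in
lemma YZ (r n p t : ℕ) : Ys r n (p+1) t = Zs r n (p+1) (t+1) + Ys r n p (t+1) := by
  have hd := shift_dance (fun j => ((n+p+t+2).choose (p+1-j) : ℤ)) (fun j => Vz r n (t+1+j)) t p
  have hz : Zs r n (p+1) (t+1)
      = ∑ j ∈ range (p+2), (-1:ℤ)^j * ((n+p+t+2).choose (p+1-j) : ℤ) * ((t+1+j).choose j : ℤ) * Vz r n (t+1+j) := by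
    simp only [Zs, show n+(p+1)+(t+1) = n+p+t+2 from by omega, show p+1+1 = p+2 from rfl]
  have hy1 : Ys r n (p+1) t
      = ∑ j ∈ range (p+2), (-1:ℤ)^j * ((n+p+t+2).choose (p+1-j) : ℤ) * ((t+j).choose j : ℤ) * Vz r n (t+1+j) := by
    simp only [Ys, show n+(p+1)+t+1 = n+p+t+2 from by omega, show p+1+1 = p+2 from rfl]
  have hy2 : Ys r n p (t+1)
      = ∑ j ∈ range (p+1), (-1:ℤ)^j * ((n+p+t+2).choose (p+1-(j+1)) : ℤ) * ((t+1+j).choose j : ℤ) * Vz r n (t+1+(j+1)) := by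
    simp only [Ys]
    refine Finset.sum_congr rfl fun j _ => ?_
    rw [show n+p+(t+1)+1 = n+p+t+2 from by omega, show p+1-(j+1) = p-j from by omega,
        show t+1+(j+1) = t+1+1+j from by omega]
  rw [hz, hy1, hy2, hd]
  ring

open Finset in
lemma Ysum (r n : ℕ) : ∀ p t, Ys r n p t = ∑ a ∈ range (p+1), Zs r n a (p+t+1-a) := by
  intro p
  induction p with
  | zero =>
    intro t
    simp [Ys, Zs_p0]
  | succ p ih =>
    intro t
    rw [YZ, ih (t+1)]
    rw [Finset.sum_range_succ (fun a => Zs r n a (p+1+t+1-a)) (p+1)]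
    rw [show p+1+t+1-(p+1) = t+1 from by omega]
    have hc : ∀ a ∈ range (p+1), Zs r n a (p+(t+1)+1-a) = Zs r n a (p+1+t+1-a) := by
      intro a ha
      rw [show p+(t+1)+1 = p+1+t+1 from by omega]
    rw [Finset.sum_congr rfl hc]
    ring

open Finset in
theorem rStirling2_power_identity' (n p q r : ℕ) (hp : n ≤ p) :
    ∑ j ∈ Finset.range (p + 1),
      (-1 : ℤ) ^ j * ((n + p + q + 1).choose (p - j)) * ((q + j).choose j) *
        rStirling2 r (n + r + q + 1 + j) (r + q + 1 + j)
    = ((n + p + q + 1).choose n : ℤ) * (r : ℤ) ^ n := by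
  have h1 : ∑ j ∈ Finset.range (p + 1),
      (-1 : ℤ) ^ j * ((n + p + q + 1).choose (p - j)) * ((q + j).choose j) *
        rStirling2 r (n + r + q + 1 + j) (r + q + 1 + j) = Ys r n p q := by
    refine Finset.sum_congr rfl fun j _ => ?_
    simp only [Ys, Vz]
    rw [show n+r+(q+1+j) = n+r+q+1+j from by omega, show r+(q+1+j) = r+q+1+j from by omega,
        show n+p+q+1 = n+p+q+1 from rfl]
  rw [h1, Ysum]
  have h2 : ∑ a ∈ range (p+1), Zs r n a (p+q+1-a) = Dz r n (p+q+1) := by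
    unfold Dz
    refine Finset.sum_subset ?_ ?_
    · intro a ha
      simp only [Finset.mem_range] at *
      omega
    · intro a ha ha'
      simp only [Finset.mem_range] at ha ha'
      exact Zzero r n a _ (by omega)
  rw [h2, Dval]
  rw [show n+(p+q+1) = n+p+q+1 from by omega]

theorem rStirling2_power_identity (n p q r : ℕ) (hp : n ≤ p) :
    ∑ j ∈ Finset.range (p + 1),
      (-1 : ℤ) ^ j * ((n + p + q + 1).choose (p - j)) * ((q + j).choose j) *
        rStirling2 r (n + r + q + 1 + j) (r + q + 1 + j)
    = ((n + p + q + 1).choose n : ℤ) * (r : ℤ) ^ n := by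
  exact rStirling2_power_identity' n p q r hp
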